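/- For every integer p ≥ 2, the 3-comb-pasting S_p is isomorphic to a subgraph of L_3(θ_{3,p}); consequently, for all n, ex(n, S_p) ≤ ex(n, L_3(θ_{3,p})). -/
import Mathlib


open SimpleGraph

/-- `G` contains a copy of `H` (an injective graph homomorphism from `H` to `G`). -/
def SimpleGraph.Contains {α β : Type*} (G : SimpleGraph α) (H : SimpleGraph β) : Prop :=
  ∃ f : H →g G, Function.Injective f

/-- The Turán number `ex(n, H)`: the maximum number of edges in an `n`-vertex
graph containing no copy of `H`. -/
noncomputable def exNum {β : Type*} (n : ℕ) (H : SimpleGraph β) : ℕ :=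
  sSup {N : ℕ | ∃ G : SimpleGraph (Fin n), ¬ G.Contains H ∧ G.edgeSet.ncard = N}

/-- The theta graph `θ_{3,p}`: `p` internally disjoint paths of length `3` joining the two
endpoints `Sum.inl false` and `Sum.inl true`; the `i`-th path is
`inl false — (i,0) — (i,1) — inl true`. -/
def theta3 (p : ℕ) : SimpleGraph (Bool ⊕ (Fin p × Fin 2)) :=
  SimpleGraph.fromRel fun x y =>
    match x, y with
    | Sum.inl b, Sum.inr (_, j) => (b = false ∧ (j : ℕ) = 0) ∨ (b = true ∧ (j : ℕ) = 1)
    | Sum.inr (i, j), Sum.inr (ii, jj) => i = ii ∧ (jj : ℕ) = (j : ℕ) + 1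
    | _, _ => False

/-- The partite set `A` of `θ_{3,p}` containing `inl false`, enumerated by `Fin (p+1)`:
it consists of `inl false` together with the internal vertices `(i, 1)`. -/
def AvertOf (p : ℕ) : Fin (p + 1) → Bool ⊕ (Fin p × Fin 2) :=
  Fin.cases (Sum.inl false) fun i => Sum.inr (i, 1)

/-- `L₃(θ_{3,p})`: the graph obtained from `θ_{3,p}` by adding a new vertex (`inr (inr ())`)
joined to every vertex of the partite set `A` by internally disjoint paths of length `2`,
whose internal vertices (`inr (inl j)` for `j : Fin (p+1)`) are new and distinct. -/
def L3theta3 (p : ℕ) :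
    SimpleGraph ((Bool ⊕ (Fin p × Fin 2)) ⊕ (Fin (p + 1) ⊕ Unit)) :=
  SimpleGraph.fromRel fun x y =>
    match x, y with
    | Sum.inl a, Sum.inl b => (theta3 p).Adj a b
    | Sum.inr (Sum.inl _), Sum.inr (Sum.inr _) => True
    | Sum.inl a, Sum.inr (Sum.inl j) => a = AvertOf p j
    | _, _ => False

/-- The 3-comb-pasting `S_p`: `p` disjoint copies of the 3-comb `T₃` (a path `a b c` plus
pendant vertices attached to `a`, `b`, `c`), with the `p` images of the pendant vertex at `a`
identified into the single vertex `Sum.inl 0`, those at `b` into `Sum.inl 1`, and those at `c`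
into `Sum.inl 2`; the `i`-th copy of the path is `(i,0) (i,1) (i,2)`. -/
def combPasting (p : ℕ) : SimpleGraph (Fin 3 ⊕ (Fin p × Fin 3)) :=
  SimpleGraph.fromRel fun x y =>
    match x, y with
    | Sum.inl j, Sum.inr (_, jj) => j = jj
    | Sum.inr (i, j), Sum.inr (ii, jj) => i = ii ∧ (jj : ℕ) = (j : ℕ) + 1
    | _, _ => False

def embFun (p : ℕ) : Fin 3 ⊕ (Fin p × Fin 3) → ((Bool ⊕ (Fin p × Fin 2)) ⊕ (Fin (p + 1) ⊕ Unit))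
  | Sum.inl j =>
      if j.val = 0 then Sum.inr (Sum.inr ())
      else if j.val = 1 then Sum.inl (Sum.inl true)
      else Sum.inl (Sum.inl false)
  | Sum.inr (i, j) =>
      if j.val = 0 then Sum.inr (Sum.inl i.succ)
      else if j.val = 1 then Sum.inl (Sum.inr (i, 1))
      else Sum.inl (Sum.inr (i, 0))

lemma embFun_inj (p : ℕ) : Function.Injective (embFun p) := by
  intro x y h
  rcases x with j | ⟨i, j⟩ <;> rcases y with jj | ⟨ii, jj⟩ <;>
    fin_cases j <;> fin_cases jj <;> simp_all [embFun]

set_option maxHeartbeats 1000000 in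
/-- For every $p ≥ 2$, the 3-comb-pasting $S_p$ is isomorphic to a subgraph of
$L_3(θ_{3,p})$; consequently $ex(n, S_p) ≤ ex(n, L_3(θ_{3,p}))$ for all $n$. -/
theorem combPasting_subgraph_L3theta3 (p : ℕ) (hp : 2 ≤ p) :
    (L3theta3 p).Contains (combPasting p) ∧
      ∀ n : ℕ, exNum n (combPasting p) ≤ exNum n (L3theta3 p) := by
  have hcont : (L3theta3 p).Contains (combPasting p) := by
    refine ⟨⟨embFun p, ?_⟩, ?_⟩
    · intro x y hadj
      rw [combPasting, SimpleGraph.fromRel_adj] at hadj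
      obtain ⟨hne, hrel⟩ := hadj
      rcases x with j | ⟨i, j⟩ <;> rcases y with jj | ⟨ii, jj⟩ <;>
        fin_cases j <;> fin_cases jj <;>
        simp_all [embFun, L3theta3, theta3, AvertOf, SimpleGraph.fromRel_adj]
    · exact embFun_inj p
  refine ⟨hcont, fun n => ?_⟩
  obtain ⟨f, hf⟩ := hcont
  apply csSup_le_csSup'
  · refine ⟨Fintype.card (Sym2 (Fin n)), ?_⟩
    rintro N ⟨G, -, hN⟩
    rw [← hN]
    exact (Set.ncard_le_ncard (Set.subset_univ _) Set.finite_univ).trans_eq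
      (by simp [Set.ncard_univ, Nat.card_eq_fintype_card])
  · rintro N ⟨G, hG, hN⟩
    exact ⟨G, fun ⟨g, hg⟩ => hG ⟨g.comp f, hg.comp hf⟩, hN⟩
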